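/- Let B, R > 0, ℓ > 2R, Θ₀ > 0, and let C₀, h₀ > 0. Suppose m, m' : (0, h₀) → ℝ satisfy |h·m(h) − BR²/2 − √(h·Θ₀·B·R²)| ≤ C₀·h and |h·m'(h) − BR²/2 − √(h·Θ₀·B·R²)| ≤ C₀·h for all h ∈ (0,h₀). Set x₂* = −i·√(ℓ²/4 − R²), and for each h let s_h be the phase with parameters m(h), m'(h). Then there exist C > 0 and ε > 0 such that for all real x₂ with |x₂| ≤ ε and all h ∈ (0, ε): | s_h(0, x₂ + x₂*) − s_h(0, x₂*) − (B·√(ℓ²−4R²)/(4R²))·(ℓ − √(ℓ²−4R²))·x₂² + i·(x₂/R)·(ℓ − √(ℓ²−4R²))·√(h·Θ₀·B) | ≤ C·(|x₂|³ + √h·x₂² + h·|x₂|). -/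

import Mathlib

set_option maxHeartbeats 1000000
set_option linter.unusedVariables false


/-- The `h`-dependent phase function `s_h` of the paper, with parameters `B`, `R`, `ℓ`, `h`
and angular momenta `m`, `m'`, using the principal branch `Complex.log`. -/
noncomputable def sh (B R ℓ h m m' : ℝ) (x₁ x₂ : ℂ) : ℂ :=
  ((B : ℂ) / 4) * (x₁ + (ℓ : ℂ) / 2) ^ 2 + ((B : ℂ) / 4) * (x₁ - (ℓ : ℂ) / 2) ^ 2
    + ((B : ℂ) / 2) * x₂ ^ 2 - (B : ℂ) * (R : ℂ) ^ 2 / 2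
    + Complex.I * ((B : ℂ) * (ℓ : ℂ) / 2) * x₂
    - (h : ℂ) * (m : ℂ) * Complex.log (((ℓ : ℂ) / 2 + x₁ + Complex.I * x₂) / (R : ℂ))
    - (h : ℂ) * (m' : ℂ) * Complex.log (((ℓ : ℂ) / 2 - x₁ + Complex.I * x₂) / (R : ℂ))


lemma logTaylor_three (w : ℂ) : Complex.logTaylor 3 w = w - w^2/2 := by
  simp [Complex.logTaylor_succ, Complex.logTaylor_zero]
  ring

lemma sh_key (B R ℓ h m m' a : ℝ) (hR : 0 < R) (ha : 0 < a) (haℓ : a < ℓ/2) (x : ℝ) :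
    sh B R ℓ h m m' 0 ((x:ℂ) + -(Complex.I * (a:ℂ))) - sh B R ℓ h m m' 0 (-(Complex.I * (a:ℂ)))
    = ((B:ℂ)/2)*(x:ℂ)^2 + Complex.I*(B:ℂ)*((ℓ:ℂ)/2 - (a:ℂ))*(x:ℂ)
      - ((h:ℂ)*((m:ℂ)+(m':ℂ))) * Complex.log (1 + Complex.I*(x:ℂ)/((ℓ/2 + a : ℝ):ℂ)) := by
  have hc : (0:ℝ) < ℓ/2 + a := by linarith
  have hcC : ((ℓ/2 + a : ℝ):ℂ) ≠ 0 := by exact_mod_cast hc.ne'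
  have hcC2 : ((ℓ:ℂ)/2 + (a:ℂ)) ≠ 0 := by push_cast at hcC; exact hcC
  have hRC : ((R:ℝ):ℂ) ≠ 0 := by exact_mod_cast hR.ne'
  have hcC3 : (ℓ:ℂ) + (a:ℂ)*2 ≠ 0 := by
    intro H; apply hcC2; linear_combination H/2
  have hIa : Complex.I * ((x:ℂ) + -(Complex.I*(a:ℂ))) = (a:ℂ) + Complex.I*(x:ℂ) := by
    linear_combination (-(a:ℂ)) * Complex.I_sq
  have hIa2 : Complex.I * (-(Complex.I*(a:ℂ))) = (a:ℂ) := by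
    linear_combination (-(a:ℂ)) * Complex.I_sq
  have hne : (1 + Complex.I*(x:ℂ)/((ℓ/2 + a : ℝ):ℂ)) ≠ 0 := by
    intro H
    have h2 : Complex.I*(x:ℂ)/((ℓ/2 + a : ℝ):ℂ) = ((x/(ℓ/2+a) : ℝ):ℂ) * Complex.I := by
      rw [Complex.ofReal_div]; ring
    have h1 : (1 + Complex.I*(x:ℂ)/((ℓ/2 + a : ℝ):ℂ)).re = 1 := by
      rw [h2, show ((x/(ℓ/2+a) : ℝ):ℂ) * Complex.I = Complex.I * ((x/(ℓ/2+a) : ℝ):ℂ) from mul_comm _ _]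
      simp
      rw [show (x:ℂ)/((ℓ:ℂ)/2+(a:ℂ)) = ((x/(ℓ/2+a) : ℝ):ℂ) by push_cast; ring]
      exact Complex.ofReal_im _
    rw [H] at h1; simp at h1
  have harg1 : ((ℓ : ℂ) / 2 + 0 + Complex.I * ((x:ℂ) + -(Complex.I * (a:ℂ)))) / (R:ℂ)
      = (((ℓ/2 + a)/R : ℝ):ℂ) * (1 + Complex.I*(x:ℂ)/((ℓ/2 + a : ℝ):ℂ)) := by
    rw [hIa]; push_cast; rw [div_eq_iff hRC]; field_simp [hcC3]; linear_combination (-2*Complex.I*(x:ℂ)) * mul_inv_cancel₀ hcC3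
  have harg1' : ((ℓ : ℂ) / 2 - 0 + Complex.I * ((x:ℂ) + -(Complex.I * (a:ℂ)))) / (R:ℂ)
      = (((ℓ/2 + a)/R : ℝ):ℂ) * (1 + Complex.I*(x:ℂ)/((ℓ/2 + a : ℝ):ℂ)) := by
    rw [← harg1]; norm_num
  have harg2 : ((ℓ : ℂ) / 2 + 0 + Complex.I * (-(Complex.I * (a:ℂ)))) / (R:ℂ)
      = (((ℓ/2 + a)/R : ℝ):ℂ) := by
    rw [hIa2]; push_cast; rw [div_eq_iff hRC]; field_simp [hcC3]; ring
  have harg2' : ((ℓ : ℂ) / 2 - 0 + Complex.I * (-(Complex.I * (a:ℂ)))) / (R:ℂ)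
      = (((ℓ/2 + a)/R : ℝ):ℂ) := by rw [← harg2]; norm_num
  have hlog1 : Complex.log ((((ℓ/2 + a)/R : ℝ):ℂ) * (1 + Complex.I*(x:ℂ)/((ℓ/2 + a : ℝ):ℂ)))
      = (Real.log ((ℓ/2+a)/R) : ℂ) + Complex.log (1 + Complex.I*(x:ℂ)/((ℓ/2 + a : ℝ):ℂ)) :=
    Complex.log_ofReal_mul (by positivity) hne
  have hlog2 : Complex.log (((((ℓ/2 + a)/R : ℝ)):ℂ)) = (Real.log ((ℓ/2+a)/R) : ℂ) := by
    rw [Complex.ofReal_log (by positivity)]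
  unfold sh
  rw [harg1, harg1', harg2, harg2', hlog1, hlog2]
  ring

lemma main_id (B R ℓ a c S M x : ℝ) (L : ℂ) (hR : R ≠ 0) (hc : c ≠ 0)
    (hcd : c = ℓ/2 + a) (ha2 : a^2 = ℓ^2/4 - R^2) :
    ((B:ℂ)/2)*(x:ℂ)^2 + Complex.I*(B:ℂ)*((ℓ:ℂ)/2 - (a:ℂ))*(x:ℂ) - (M:ℂ)*L
      - ((B * (2*a) / (4*R^2) * (ℓ - 2*a) * x^2 : ℝ):ℂ)
      + Complex.I * ((x / R * (ℓ - 2*a) * S : ℝ):ℂ)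
    = -(((M - B*R^2 - 2*R*S : ℝ)):ℂ)
        * (Complex.I*(x:ℂ)/(c:ℂ) + (x:ℂ)^2/(2*(c:ℂ)^2))
      - ((R*S*x^2/c^2 : ℝ):ℂ)
      - (M:ℂ)*(L - (Complex.I*(x:ℂ)/(c:ℂ)
          - (Complex.I*(x:ℂ)/(c:ℂ))^2/2)) := by
  have hRC : (R:ℂ) ≠ 0 := by exact_mod_cast hR
  have hcC : (c:ℂ) ≠ 0 := by exact_mod_cast hc
  have hcdC : (c:ℂ) = (ℓ:ℂ)/2 + (a:ℂ) := by exact_mod_cast hcd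
  have hR2C : (R:ℂ)^2 = (ℓ:ℂ)^2/4 - (a:ℂ)^2 := by
    have : (a:ℂ)^2 = (ℓ:ℂ)^2/4 - (R:ℂ)^2 := by exact_mod_cast ha2
    linear_combination this
  have hRR : (R:ℂ)*(R:ℂ)⁻¹ = 1 := mul_inv_cancel₀ hRC
  have hcc : (c:ℂ)*(c:ℂ)⁻¹ = 1 := mul_inv_cancel₀ hcC
  have hk : ((8:ℂ)*(R:ℂ)^3*(c:ℂ)^2) ≠ 0 :=
    mul_ne_zero (mul_ne_zero (by norm_num) (pow_ne_zero _ hRC)) (pow_ne_zero _ hcC)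
  have h3 : (4*(B:ℂ)*(R:ℂ)^3*(c:ℂ)^2*(x:ℂ)^2
        + 8*(B:ℂ)*(R:ℂ)^3*(c:ℂ)^2*((ℓ:ℂ)/2 - (a:ℂ))*Complex.I*(x:ℂ)
        - 8*(M:ℂ)*L*(R:ℂ)^3*(c:ℂ)^2
        - 4*(B:ℂ)*(a:ℂ)*((ℓ:ℂ) - 2*(a:ℂ))*(x:ℂ)^2*(R:ℂ)*(c:ℂ)^2
        + 8*Complex.I*(x:ℂ)*((ℓ:ℂ)-2*(a:ℂ))*(S:ℂ)*(R:ℂ)^2*(c:ℂ)^2)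
      = (-((M:ℂ) - (B:ℂ)*(R:ℂ)^2 - 2*(R:ℂ)*(S:ℂ))
            *(8*(R:ℂ)^3*(c:ℂ)*Complex.I*(x:ℂ) + 4*(R:ℂ)^3*(x:ℂ)^2)
        - 8*(R:ℂ)^4*(S:ℂ)*(x:ℂ)^2 - 8*(M:ℂ)*L*(R:ℂ)^3*(c:ℂ)^2
        + (M:ℂ)*(8*Complex.I*(x:ℂ)*(R:ℂ)^3*(c:ℂ) - 4*Complex.I^2*(x:ℂ)^2*(R:ℂ)^3)) := by
    linear_combination
      (4*(M:ℂ)*(x:ℂ)^2*(R:ℂ)^3) * Complex.I_sq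
      + (-16*(S:ℂ)*(x:ℂ)*Complex.I*(R:ℂ)^4 - 16*(a:ℂ)*(S:ℂ)*(x:ℂ)*Complex.I*(R:ℂ)^2*(c:ℂ)
         - 16*(a:ℂ)^2*(S:ℂ)*(x:ℂ)*Complex.I*(R:ℂ)^2 + 8*(ℓ:ℂ)*(S:ℂ)*(x:ℂ)*Complex.I*(R:ℂ)^2*(c:ℂ)
         + 4*(ℓ:ℂ)^2*(S:ℂ)*(x:ℂ)*Complex.I*(R:ℂ)^2 - 8*(B:ℂ)*(x:ℂ)*Complex.I*(R:ℂ)^5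
         + 4*(B:ℂ)*(x:ℂ)^2*(R:ℂ)^3*(c:ℂ) - 8*(B:ℂ)*(a:ℂ)*(x:ℂ)*Complex.I*(R:ℂ)^3*(c:ℂ)
         + 4*(B:ℂ)*(a:ℂ)*(x:ℂ)^2*(R:ℂ)^3 - 8*(B:ℂ)*(a:ℂ)^2*(x:ℂ)*Complex.I*(R:ℂ)^3
         + 8*(B:ℂ)*(a:ℂ)^2*(x:ℂ)^2*(R:ℂ)*(c:ℂ) + 8*(B:ℂ)*(a:ℂ)^3*(x:ℂ)^2*(R:ℂ)
         + 4*(B:ℂ)*(ℓ:ℂ)*(x:ℂ)*Complex.I*(R:ℂ)^3*(c:ℂ) + 2*(B:ℂ)*(ℓ:ℂ)*(x:ℂ)^2*(R:ℂ)^3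
         - 4*(B:ℂ)*(ℓ:ℂ)*(a:ℂ)*(x:ℂ)^2*(R:ℂ)*(c:ℂ) + 2*(B:ℂ)*(ℓ:ℂ)^2*(x:ℂ)*Complex.I*(R:ℂ)^3
         - 2*(B:ℂ)*(ℓ:ℂ)^2*(a:ℂ)*(x:ℂ)^2*(R:ℂ)) * hcdC
      + (-16*(a:ℂ)*(S:ℂ)*(x:ℂ)*Complex.I*(R:ℂ)^2 - 8*(ℓ:ℂ)*(S:ℂ)*(x:ℂ)*Complex.I*(R:ℂ)^2
         - 4*(B:ℂ)*(x:ℂ)^2*(R:ℂ)^3 - 8*(B:ℂ)*(a:ℂ)*(x:ℂ)*Complex.I*(R:ℂ)^3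
         + 8*(B:ℂ)*(a:ℂ)^2*(x:ℂ)^2*(R:ℂ) - 4*(B:ℂ)*(ℓ:ℂ)*(x:ℂ)*Complex.I*(R:ℂ)^3
         + 4*(B:ℂ)*(ℓ:ℂ)*(a:ℂ)*(x:ℂ)^2*(R:ℂ)) * hR2C
  have h1 : (((B:ℂ)/2)*(x:ℂ)^2 + Complex.I*(B:ℂ)*((ℓ:ℂ)/2 - (a:ℂ))*(x:ℂ) - (M:ℂ)*L
        - ((B * (2*a) / (4*R^2) * (ℓ - 2*a) * x^2 : ℝ):ℂ)
        + Complex.I * ((x / R * (ℓ - 2*a) * S : ℝ):ℂ))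
      = (4*(B:ℂ)*(R:ℂ)^3*(c:ℂ)^2*(x:ℂ)^2
        + 8*(B:ℂ)*(R:ℂ)^3*(c:ℂ)^2*((ℓ:ℂ)/2 - (a:ℂ))*Complex.I*(x:ℂ)
        - 8*(M:ℂ)*L*(R:ℂ)^3*(c:ℂ)^2
        - 4*(B:ℂ)*(a:ℂ)*((ℓ:ℂ) - 2*(a:ℂ))*(x:ℂ)^2*(R:ℂ)*(c:ℂ)^2
        + 8*Complex.I*(x:ℂ)*((ℓ:ℂ)-2*(a:ℂ))*(S:ℂ)*(R:ℂ)^2*(c:ℂ)^2) / ((8:ℂ)*(R:ℂ)^3*(c:ℂ)^2) := by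
    rw [eq_div_iff hk]
    push_cast
    linear_combination (-16*(a:ℂ)*S*x*Complex.I*(R:ℂ)^2*(c:ℂ)^2 + 8*(ℓ:ℂ)*S*x*Complex.I*(R:ℂ)^2*(c:ℂ)^2
      + 8*(B:ℂ)*(a:ℂ)^2*(x:ℂ)^2*(R:ℂ)*(c:ℂ)^2 + 8*(B:ℂ)*(a:ℂ)^2*(x:ℂ)^2*(R:ℂ)^2*(c:ℂ)^2*(R:ℂ)⁻¹
      - 4*(B:ℂ)*(ℓ:ℂ)*(a:ℂ)*(x:ℂ)^2*(R:ℂ)*(c:ℂ)^2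
      - 4*(B:ℂ)*(ℓ:ℂ)*(a:ℂ)*(x:ℂ)^2*(R:ℂ)^2*(c:ℂ)^2*(R:ℂ)⁻¹) * hRR
  have h2 : (-(((M - B*R^2 - 2*R*S : ℝ)):ℂ)
          * (Complex.I*(x:ℂ)/(c:ℂ) + (x:ℂ)^2/(2*(c:ℂ)^2))
        - ((R*S*x^2/c^2 : ℝ):ℂ)
        - (M:ℂ)*(L - (Complex.I*(x:ℂ)/(c:ℂ)
            - (Complex.I*(x:ℂ)/(c:ℂ))^2/2)))
      = (-((M:ℂ) - (B:ℂ)*(R:ℂ)^2 - 2*(R:ℂ)*(S:ℂ))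
            *(8*(R:ℂ)^3*(c:ℂ)*Complex.I*(x:ℂ) + 4*(R:ℂ)^3*(x:ℂ)^2)
        - 8*(R:ℂ)^4*(S:ℂ)*(x:ℂ)^2 - 8*(M:ℂ)*L*(R:ℂ)^3*(c:ℂ)^2
        + (M:ℂ)*(8*Complex.I*(x:ℂ)*(R:ℂ)^3*(c:ℂ) - 4*Complex.I^2*(x:ℂ)^2*(R:ℂ)^3)) / ((8:ℂ)*(R:ℂ)^3*(c:ℂ)^2) := by
    rw [eq_div_iff hk]
    push_cast
    linear_combination (-4*(M:ℂ)*(x:ℂ)^2*(R:ℂ)^3 - 4*(M:ℂ)*(x:ℂ)^2*(R:ℂ)^3*(c:ℂ)*(c:ℂ)⁻¹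
      - 4*(M:ℂ)*(x:ℂ)^2*Complex.I^2*(R:ℂ)^3 - 4*(M:ℂ)*(x:ℂ)^2*Complex.I^2*(R:ℂ)^3*(c:ℂ)*(c:ℂ)⁻¹
      + 16*(S:ℂ)*(x:ℂ)*Complex.I*(R:ℂ)^4*(c:ℂ) + 8*(B:ℂ)*(x:ℂ)*Complex.I*(R:ℂ)^5*(c:ℂ)
      + 4*(B:ℂ)*(x:ℂ)^2*(R:ℂ)^5 + 4*(B:ℂ)*(x:ℂ)^2*(R:ℂ)^5*(c:ℂ)*(c:ℂ)⁻¹) * hcc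
  rw [h1, h2, h3]

lemma final_arith (C₀ B R Θ₀ Mb u h x : ℝ) (hC₀ : 0 < C₀) (hu : 0 < u)
    (hh0 : 0 < h) (hh1 : h ≤ 1) (hx1 : |x| ≤ 1) (hMb0 : 0 ≤ Mb) (hR : 0 < R)
    (hS : Real.sqrt (h*Θ₀*B) = Real.sqrt h * Real.sqrt (Θ₀*B)) :
    2*C₀*h*(|x|/u + x^2/(2*u^2)) + R*Real.sqrt (h*Θ₀*B)*x^2/u^2
      + Mb*((|x|/u)^3*2/3)
    ≤ (2*C₀/u + C₀/u^2 + R*Real.sqrt (Θ₀*B)/u^2 + Mb*(2/(3*u^3)))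
        * (|x|^3 + Real.sqrt h*x^2 + h*|x|) := by
  have hsΘB : (0:ℝ) ≤ Real.sqrt (Θ₀*B) := Real.sqrt_nonneg _
  have hsqh0 : (0:ℝ) ≤ Real.sqrt h := Real.sqrt_nonneg _
  have hx2' : x^2 ≤ |x| := by
    have h1 := mul_le_mul_of_nonneg_left hx1 (abs_nonneg x)
    rw [mul_one] at h1
    calc x^2 = |x| * |x| := by rw [← sq_abs]; ring
      _ ≤ |x| := h1
  have hT3 : (0:ℝ) ≤ |x|^3 := by positivity
  have hT2 : (0:ℝ) ≤ Real.sqrt h * x^2 := by positivity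
  have hT1 : (0:ℝ) ≤ h*|x| := mul_nonneg hh0.le (abs_nonneg x)
  have hK1 : (0:ℝ) ≤ 2*C₀/u + C₀/u^2 :=
    add_nonneg (div_nonneg (by linarith) hu.le) (div_nonneg hC₀.le (by positivity))
  have hK2 : (0:ℝ) ≤ R*Real.sqrt (Θ₀*B)/u^2 :=
    div_nonneg (mul_nonneg hR.le hsΘB) (by positivity)
  have hK3 : (0:ℝ) ≤ Mb*(2/(3*u^3)) :=
    mul_nonneg hMb0 (div_nonneg (by norm_num) (by positivity))
  have q : (C₀/u^2) * (h*x^2) ≤ (C₀/u^2) * (h*|x|) :=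
    mul_le_mul_of_nonneg_left (mul_le_mul_of_nonneg_left hx2' hh0.le)
      (div_nonneg hC₀.le (sq_nonneg _))
  have g1 : 2*C₀*h*(|x|/u + x^2/(2*u^2)) ≤ (2*C₀/u + C₀/u^2)*(h*|x|) := by
    have idg : 2*C₀*h*(|x|/u + x^2/(2*u^2))
        = (2*C₀/u)*(h*|x|) + (C₀/u^2) * (h*x^2) := by ring
    have idg2 : (2*C₀/u + C₀/u^2)*(h*|x|)
        = (2*C₀/u)*(h*|x|) + (C₀/u^2) * (h*|x|) := by ring
    rw [idg, idg2]
    exact add_le_add_right q _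
  have g2 : R*Real.sqrt (h*Θ₀*B)*x^2/u^2
      = (R*Real.sqrt (Θ₀*B)/u^2)*(Real.sqrt h*x^2) := by rw [hS]; ring
  have g3 : Mb*((|x|/u)^3*2/3) = (Mb*(2/(3*u^3)))*|x|^3 := by ring
  rw [g2, g3]
  linarith only [g1, mul_nonneg hK1 hT3, mul_nonneg hK1 hT2,
    mul_nonneg hK2 hT3, mul_nonneg hK2 hT1, mul_nonneg hK3 hT2,
    mul_nonneg hK3 hT1]

/-- Taylor-type expansion of `x₂ ↦ s_h(0, x₂ + x₂*)` for real `x₂` near `0`: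
there are `C, ε > 0` such that for `|x₂| ≤ ε` and `h ∈ (0, ε)`,
`|s_h(0, x₂+x₂*) − s_h(0, x₂*) − A·x₂² + i·(x₂/R)(ℓ−√(ℓ²−4R²))√(hΘ₀B)|
  ≤ C(|x₂|³ + √h·x₂² + h·|x₂|)`, where
`A = (B√(ℓ²−4R²)/(4R²))(ℓ − √(ℓ²−4R²))`, assuming
`h·m(h) = BR²/2 + √(hΘ₀BR²) + O(h)` and similarly for `m'`. -/
theorem sh_expansion (B R ℓ Θ₀ C₀ h₀ : ℝ) (hB : 0 < B) (hR : 0 < R) (hℓ : 2 * R < ℓ)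
    (hΘ : 0 < Θ₀) (hC₀ : 0 < C₀) (hh₀ : 0 < h₀) (m m' : ℝ → ℝ)
    (hm : ∀ h ∈ Set.Ioo (0 : ℝ) h₀,
      |h * m h - B * R ^ 2 / 2 - Real.sqrt (h * Θ₀ * B * R ^ 2)| ≤ C₀ * h)
    (hm' : ∀ h ∈ Set.Ioo (0 : ℝ) h₀,
      |h * m' h - B * R ^ 2 / 2 - Real.sqrt (h * Θ₀ * B * R ^ 2)| ≤ C₀ * h) :
    ∃ C > 0, ∃ ε > 0, ∀ x₂ : ℝ, |x₂| ≤ ε → ∀ h ∈ Set.Ioo (0 : ℝ) ε,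
      ‖(sh B R ℓ h (m h) (m' h) 0
            ((x₂ : ℂ) + -(Complex.I * (Real.sqrt (ℓ ^ 2 / 4 - R ^ 2) : ℂ)))
          - sh B R ℓ h (m h) (m' h) 0 (-(Complex.I * (Real.sqrt (ℓ ^ 2 / 4 - R ^ 2) : ℂ)))
          - ((B * Real.sqrt (ℓ ^ 2 - 4 * R ^ 2) / (4 * R ^ 2)
                * (ℓ - Real.sqrt (ℓ ^ 2 - 4 * R ^ 2)) * x₂ ^ 2 : ℝ) : ℂ)
          + Complex.I * ((x₂ / R * (ℓ - Real.sqrt (ℓ ^ 2 - 4 * R ^ 2))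
                * Real.sqrt (h * Θ₀ * B) : ℝ) : ℂ))‖
        ≤ C * (|x₂| ^ 3 + Real.sqrt h * x₂ ^ 2 + h * |x₂|) := by
  set a := Real.sqrt (ℓ ^ 2 / 4 - R ^ 2) with hadef
  have hR2lt : R ^ 2 < ℓ ^ 2 / 4 := by nlinarith
  have ha2 : a ^ 2 = ℓ ^ 2 / 4 - R ^ 2 := Real.sq_sqrt (by linarith)
  have hapos : 0 < a := Real.sqrt_pos.mpr (by linarith)
  have haℓ : a < ℓ / 2 := by nlinarith [ha2, hapos]
  have hcpos : (0:ℝ) < ℓ / 2 + a := by linarith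
  have hs4 : Real.sqrt (ℓ ^ 2 - 4 * R ^ 2) = 2 * a := by
    rw [show ℓ ^ 2 - 4 * R ^ 2 = (2*a)^2 by nlinarith [ha2]]
    exact Real.sqrt_sq (by linarith)
  set Mb : ℝ := 2*C₀ + B*R^2 + 2*R*Real.sqrt (Θ₀*B) with hMbdef
  have hsΘB : (0:ℝ) ≤ Real.sqrt (Θ₀*B) := Real.sqrt_nonneg _
  have hMb0 : (0:ℝ) ≤ Mb := by
    rw [hMbdef]
    have : (0:ℝ) ≤ 2*R*Real.sqrt (Θ₀*B) := by positivity
    nlinarith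
  refine ⟨2*C₀/(ℓ/2+a) + C₀/(ℓ/2+a)^2 + R*Real.sqrt (Θ₀*B)/(ℓ/2+a)^2
      + Mb*(2/(3*(ℓ/2+a)^3)), ?_, min (min 1 ((ℓ/2+a)/2)) h₀, ?_, ?_⟩
  · have h1 : 0 < 2*C₀/(ℓ/2+a) := div_pos (by linarith) hcpos
    have h2 : 0 ≤ C₀/(ℓ/2+a)^2 := div_nonneg hC₀.le (by positivity)
    have h3 : 0 ≤ R*Real.sqrt (Θ₀*B)/(ℓ/2+a)^2 := div_nonneg (by positivity) (by positivity)
    have h4 : 0 ≤ Mb*(2/(3*(ℓ/2+a)^3)) :=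
      mul_nonneg hMb0 (div_nonneg (by norm_num) (by positivity))
    linarith
  · exact lt_min (lt_min one_pos (by linarith)) hh₀
  intro x hx h hh
  obtain ⟨hh0, hhε⟩ := hh
  have hε1 : min (min 1 ((ℓ/2+a)/2)) h₀ ≤ 1 := le_trans (min_le_left _ _) (min_le_left _ _)
  have hεc : min (min 1 ((ℓ/2+a)/2)) h₀ ≤ (ℓ/2+a)/2 :=
    le_trans (min_le_left _ _) (min_le_right _ _)
  have hεh₀ : min (min 1 ((ℓ/2+a)/2)) h₀ ≤ h₀ := min_le_right _ _
  have hx1 : |x| ≤ 1 := le_trans hx hε1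
  have hxc : |x| ≤ (ℓ/2+a)/2 := le_trans hx hεc
  have hh1 : h ≤ 1 := le_of_lt (lt_of_lt_of_le hhε hε1)
  have hhh₀ : h < h₀ := lt_of_lt_of_le hhε hεh₀
  rw [hs4]
  have hM : (h:ℂ)*((m h:ℂ)+(m' h:ℂ)) = ((h * m h + h * m' h : ℝ):ℂ) := by push_cast; ring
  rw [sh_key B R ℓ h (m h) (m' h) a hR hapos haℓ x, hM,
    main_id B R ℓ a (ℓ/2+a) (Real.sqrt (h*Θ₀*B)) (h * m h + h * m' h) x
      (Complex.log (1 + Complex.I*(x:ℂ)/((ℓ/2 + a : ℝ):ℂ))) hR.ne' hcpos.ne' rfl ha2]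
  have hS0 : (0:ℝ) ≤ Real.sqrt (h*Θ₀*B) := Real.sqrt_nonneg _
  have hSsplit : Real.sqrt (h*Θ₀*B) = Real.sqrt h * Real.sqrt (Θ₀*B) := by
    rw [mul_assoc, Real.sqrt_mul hh0.le]
  have hsqh1 : Real.sqrt h ≤ 1 := by
    rw [show (1:ℝ) = Real.sqrt 1 by simp]
    exact Real.sqrt_le_sqrt hh1
  have hsqh0 : (0:ℝ) ≤ Real.sqrt h := Real.sqrt_nonneg _
  have hSle : Real.sqrt (h*Θ₀*B) ≤ Real.sqrt (Θ₀*B) := by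
    rw [hSsplit]
    exact mul_le_of_le_one_left hsΘB hsqh1
  have hsq : Real.sqrt (h * Θ₀ * B * R ^ 2) = Real.sqrt (h*Θ₀*B) * R := by
    rw [Real.sqrt_mul (by positivity) (R^2), Real.sqrt_sq hR.le]
  have t1 := hm h ⟨hh0, hhh₀⟩
  have t2 := hm' h ⟨hh0, hhh₀⟩
  rw [hsq] at t1 t2
  have hδ : |h * m h + h * m' h - B*R^2 - 2*R*Real.sqrt (h*Θ₀*B)| ≤ 2*C₀*h := by
    have e : h * m h + h * m' h - B*R^2 - 2*R*Real.sqrt (h*Θ₀*B)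
        = (h * m h - B * R ^ 2 / 2 - Real.sqrt (h*Θ₀*B) * R)
          + (h * m' h - B * R ^ 2 / 2 - Real.sqrt (h*Θ₀*B) * R) := by ring
    rw [e]
    calc |_ + _| ≤ _ + _ := abs_add_le _ _
      _ ≤ C₀ * h + C₀ * h := add_le_add t1 t2
      _ = 2*C₀*h := by ring
  have hMabs : |h * m h + h * m' h| ≤ Mb := by
    have e : h * m h + h * m' h
        = (h * m h + h * m' h - B*R^2 - 2*R*Real.sqrt (h*Θ₀*B))
          + (B*R^2 + 2*R*Real.sqrt (h*Θ₀*B)) := by ring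
    rw [e]
    calc |_ + _| ≤ _ + _ := abs_add_le _ _
      _ ≤ 2*C₀*h + |B*R^2 + 2*R*Real.sqrt (h*Θ₀*B)| := by linarith [hδ]
      _ = 2*C₀*h + (B*R^2 + 2*R*Real.sqrt (h*Θ₀*B)) := by
          rw [abs_of_nonneg (add_nonneg (by positivity)
            (mul_nonneg (by linarith) hS0))]
      _ ≤ Mb := by
          have l1 : 2*C₀*h ≤ 2*C₀ := by nlinarith only [hh1, hC₀, hh0]
          have l2 : 2*R*Real.sqrt (h*Θ₀*B) ≤ 2*R*Real.sqrt (Θ₀*B) :=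
            mul_le_mul_of_nonneg_left hSle (by linarith only [hR])
          rw [hMbdef]
          linarith only [l1, l2]
  have hznorm : ‖Complex.I*(x:ℂ)/((ℓ/2 + a : ℝ):ℂ)‖ = |x|/(ℓ/2+a) := by
    rw [norm_div, norm_mul, Complex.norm_I, one_mul, Complex.norm_real,
      Complex.norm_real, Real.norm_eq_abs, Real.norm_eq_abs, abs_of_pos hcpos]
  have hz12 : |x|/(ℓ/2+a) ≤ 1/2 := by
    rw [div_le_iff₀ hcpos]; linarith
  have hz1 : ‖Complex.I*(x:ℂ)/((ℓ/2 + a : ℝ):ℂ)‖ < 1 := by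
    rw [hznorm]; linarith
  have hρ : ‖Complex.log (1 + Complex.I*(x:ℂ)/((ℓ/2 + a : ℝ):ℂ))
      - (Complex.I*(x:ℂ)/((ℓ/2 + a : ℝ):ℂ) - (Complex.I*(x:ℂ)/((ℓ/2 + a : ℝ):ℂ))^2/2)‖
      ≤ (|x|/(ℓ/2+a))^3 * 2/3 := by
    have h0 := Complex.norm_log_sub_logTaylor_le 2 hz1
    rw [logTaylor_three] at h0
    rw [hznorm] at h0
    have hinv : (1 - |x|/(ℓ/2+a))⁻¹ ≤ 2 := by
      rw [show (2:ℝ) = (1/2:ℝ)⁻¹ by norm_num]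
      exact inv_anti₀ (by norm_num) (by linarith)
    have hp : (0:ℝ) ≤ (|x|/(ℓ/2+a))^3 :=
      pow_nonneg (div_nonneg (abs_nonneg x) hcpos.le) 3
    calc ‖_‖ ≤ (|x|/(ℓ/2+a)) ^ (2+1) * (1 - |x|/(ℓ/2+a))⁻¹ / (2+1) := h0
      _ = (|x|/(ℓ/2+a))^3 * (1 - |x|/(ℓ/2+a))⁻¹ / 3 := by norm_num
      _ ≤ (|x|/(ℓ/2+a))^3 * 2 / 3 := by
          apply div_le_div_of_nonneg_right ?_ (by norm_num)
          exact mul_le_mul_of_nonneg_left hinv hp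
  have hb1 : ‖Complex.I*(x:ℂ)/((ℓ/2 + a : ℝ):ℂ)
        + (x:ℂ)^2/(2*((ℓ/2 + a : ℝ):ℂ)^2)‖
      ≤ |x|/(ℓ/2+a) + x^2/(2*(ℓ/2+a)^2) := by
    refine (norm_add_le _ _).trans ?_
    rw [hznorm]
    apply add_le_add_right
    have : ‖(x:ℂ)^2/(2*((ℓ/2 + a : ℝ):ℂ)^2)‖ = x^2/(2*(ℓ/2+a)^2) := by
      rw [norm_div, norm_pow, Complex.norm_real, Real.norm_eq_abs, sq_abs,
        norm_mul, norm_pow, Complex.norm_real, Real.norm_eq_abs, abs_of_pos hcpos]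
      norm_num
    exact le_of_eq this
  -- final assembly
  have e1 : ‖-((( h * m h + h * m' h - B*R^2
        - 2*R*Real.sqrt (h*Θ₀*B) : ℝ)):ℂ)
      * (Complex.I*(x:ℂ)/(((ℓ/2+a : ℝ)):ℂ) + (x:ℂ)^2/(2*(((ℓ/2+a : ℝ)):ℂ)^2))‖
      ≤ (2*C₀*h) * (|x|/(ℓ/2+a) + x^2/(2*(ℓ/2+a)^2)) := by
    rw [norm_mul, norm_neg, Complex.norm_real, Real.norm_eq_abs]
    exact mul_le_mul hδ hb1 (norm_nonneg _)
      (le_of_lt (mul_pos (by linarith) hh0))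
  have e2 : ‖((R*Real.sqrt (h*Θ₀*B)*x^2/(ℓ/2+a)^2 : ℝ):ℂ)‖
      = R*Real.sqrt (h*Θ₀*B)*x^2/(ℓ/2+a)^2 := by
    rw [Complex.norm_real, Real.norm_eq_abs,
      abs_of_nonneg (div_nonneg (by positivity) (by positivity))]
  have e3 : ‖((h * m h + h * m' h : ℝ):ℂ)
      * (Complex.log (1 + Complex.I*(x:ℂ)/((ℓ/2 + a : ℝ):ℂ))
        - (Complex.I*(x:ℂ)/((ℓ/2 + a : ℝ):ℂ)
          - (Complex.I*(x:ℂ)/((ℓ/2 + a : ℝ):ℂ))^2/2))‖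
      ≤ Mb * ((|x|/(ℓ/2+a))^3 * 2/3) := by
    rw [norm_mul, Complex.norm_real, Real.norm_eq_abs]
    exact mul_le_mul hMabs hρ (norm_nonneg _) hMb0
  calc ‖_ - _ - _‖ ≤ ‖_ - _‖ + ‖_‖ := norm_sub_le _ _
    _ ≤ (‖_‖ + ‖_‖) + ‖_‖ := add_le_add_left (norm_sub_le _ _) _
    _ ≤ ((2*C₀*h) * (|x|/(ℓ/2+a) + x^2/(2*(ℓ/2+a)^2))
          + R*Real.sqrt (h*Θ₀*B)*x^2/(ℓ/2+a)^2)
        + Mb * ((|x|/(ℓ/2+a))^3 * 2/3) :=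
      add_le_add (add_le_add e1 (le_of_eq e2)) e3
    _ ≤ (2*C₀/(ℓ/2+a) + C₀/(ℓ/2+a)^2 + R*Real.sqrt (Θ₀*B)/(ℓ/2+a)^2
          + Mb*(2/(3*(ℓ/2+a)^3))) * (|x| ^ 3 + Real.sqrt h * x ^ 2 + h * |x|) := by
      exact final_arith C₀ B R Θ₀ Mb (ℓ/2+a) h x hC₀ hcpos hh0 hh1 hx1 hMb0 hR hSsplit
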